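/- When all moduli are distinct primes p_1, ..., p_L and δ is given, the dynamic range K equals x − 1 where x is the smallest integer with x ≥ 4δ such that the product p_1·p_2···p_L divides (x − 4δ + 1)(x − 4δ + 2)···(x − 1)·x. -/

import Mathlib

/-- When the moduli are distinct primes `p_1 < ... < p_L`, the dynamic range `K`
(the largest integer such that every `X ∈ [p_1, K]` has some residue `≥ 4δ`)
equals `x − 1`, where `x` is the smallest integer with `x ≥ 4δ` such that
`p_1 p_2 ⋯ p_L` divides `(x − 4δ + 1)(x − 4δ + 2) ⋯ (x − 1) x`. -/
theorem dynamicRange_eq_prime_product_characterization (L : ℕ) [NeZero L]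
    (p : Fin L → ℕ) (hp : ∀ l, (p l).Prime) (hmono : StrictMono p)
    (d : ℕ) (hd : 0 < d)
    (K : ℤ) (hKge : (p 0 : ℤ) ≤ K)
    (hK : ∀ X : ℤ, (p 0 : ℤ) ≤ X → X ≤ K →
        d ≤ Finset.sup Finset.univ (fun l => (X % (p l : ℤ)).toNat))
    (hKmax : Finset.sup Finset.univ (fun l => ((K + 1) % (p l : ℤ)).toNat) < d)
    (x : ℤ) (hxd : (d : ℤ) ≤ x)
    (hxdvd : (∏ l, (p l : ℤ)) ∣ ∏ i ∈ Finset.range d, (x - (i : ℤ)))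
    (hxmin : ∀ y : ℤ, (d : ℤ) ≤ y →
        (∏ l, (p l : ℤ)) ∣ (∏ i ∈ Finset.range d, (y - (i : ℤ))) → x ≤ y) :
    K = x - 1 := by
  have hppos : ∀ l, (0:ℤ) < p l := fun l => by exact_mod_cast (hp l).pos
  have hK0 : (0:ℤ) ≤ K := le_trans (hppos 0).le hKge
  have hple : ∀ l, (p 0 : ℤ) ≤ p l := fun l => by
    exact_mod_cast hmono.monotone (Fin.zero_le l)
  -- d ≤ p 0
  obtain ⟨l0, -, hsup0⟩ := Finset.exists_mem_eq_sup Finset.univ Finset.univ_nonempty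
      (fun l => (((p 0 : ℤ)) % (p l : ℤ)).toNat)
  have h0 := hK (p 0) le_rfl hKge
  rw [hsup0] at h0
  have hdp0 : (d : ℤ) ≤ p 0 := by
    rcases eq_or_ne l0 0 with rfl | hne
    · simp at h0; omega
    · have hlt : (p 0 : ℤ) < p l0 := by
        exact_mod_cast hmono (by simpa [Fin.pos_iff_ne_zero'] using hne)
      rw [Int.emod_eq_of_lt (hppos 0).le hlt] at h0
      exact_mod_cast h0
  -- d ≤ K
  obtain ⟨l1, -, hsup1⟩ := Finset.exists_mem_eq_sup Finset.univ Finset.univ_nonempty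
      (fun l => (K % (p l : ℤ)).toNat)
  have h1 := hK K hKge le_rfl
  rw [hsup1] at h1
  have hdK : (d:ℤ) ≤ K := by
    have hmodle : K % (p l1 : ℤ) ≤ K := by
      rcases le_or_gt (p l1 : ℤ) K with h | h
      · exact le_trans (Int.emod_lt_of_pos K (hppos l1)).le h
      · rw [Int.emod_eq_of_lt hK0 h]
    have h2 : ((K % (p l1:ℤ)).toNat : ℤ) = K % (p l1:ℤ) :=
      Int.toNat_of_nonneg (Int.emod_nonneg K (hppos l1).ne')
    have h3 : (d:ℤ) ≤ ((K % (p l1:ℤ)).toNat : ℤ) := by exact_mod_cast h1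
    omega
  -- x ≤ K + 1
  have hcop : Set.Pairwise (Finset.univ : Finset (Fin L)) (Function.onFun IsCoprime fun l => (p l : ℤ)) := by
    intro i _ j _ hij
    exact Nat.isCoprime_iff_coprime.mpr
      ((Nat.coprime_primes (hp i) (hp j)).mpr (hmono.injective.ne hij))
  have hdvdK : (∏ l, (p l : ℤ)) ∣ ∏ i ∈ Finset.range d, (K + 1 - (i:ℤ)) := by
    apply Finset.prod_dvd_of_coprime hcop
    intro l _
    have hrlt : ((K+1) % (p l:ℤ)).toNat < d :=
      lt_of_le_of_lt (Finset.le_sup (f := fun l => ((K + 1) % (p l : ℤ)).toNat) (Finset.mem_univ l)) hKmax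
    have hrc : ((((K+1) % (p l:ℤ)).toNat : ℤ)) = (K+1) % (p l:ℤ) :=
      Int.toNat_of_nonneg (Int.emod_nonneg _ (hppos l).ne')
    have hdvd : (p l:ℤ) ∣ (K+1) - (((K+1) % (p l:ℤ)).toNat : ℤ) := by
      rw [hrc]; exact Int.dvd_self_sub_of_emod_eq rfl
    exact hdvd.trans (Finset.dvd_prod_of_mem _ (Finset.mem_range.mpr hrlt))
  have hxK : x ≤ K + 1 := hxmin (K+1) (by omega) hdvdK
  -- K + 1 ≤ x
  have hKx : K + 1 ≤ x := by
    by_contra h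
    push_neg at h
    have hxK' : x ≤ K := by omega
    have hfac : ∀ l, ∃ i : ℕ, i < d ∧ (p l : ℤ) ∣ x - i := by
      intro l
      have hpl : Prime ((p l : ℤ)) := Nat.prime_iff_prime_int.mp (hp l)
      obtain ⟨i, hi, hdv⟩ := hpl.exists_mem_finset_dvd
        ((Finset.dvd_prod_of_mem (fun l => (p l:ℤ)) (Finset.mem_univ l)).trans hxdvd)
      exact ⟨i, Finset.mem_range.mp hi, hdv⟩
    have hp0x : (p 0 : ℤ) ≤ x := by
      by_contra hlt
      push_neg at hlt
      obtain ⟨i, hid, hdv⟩ := hfac 0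
      have hid' : (i:ℤ) < d := by exact_mod_cast hid
      have h1 : (0:ℤ) < x - i := by omega
      have := Int.le_of_dvd h1 hdv
      omega
    obtain ⟨l2, -, hsup2⟩ := Finset.exists_mem_eq_sup Finset.univ Finset.univ_nonempty
      (fun l => (x % (p l : ℤ)).toNat)
    have h3 := hK x hp0x hxK'
    rw [hsup2] at h3
    obtain ⟨i, hid, hdv⟩ := hfac l2
    have hid' : (i:ℤ) < d := by exact_mod_cast hid
    have hilt : (i:ℤ) < p l2 := by
      have := hple l2
      omega
    have hmod : x % (p l2:ℤ) = i := by
      have h4 : (i:ℤ) % (p l2:ℤ) = x % (p l2:ℤ) := Int.modEq_iff_dvd.mpr hdv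
      rw [← h4, Int.emod_eq_of_lt (Int.natCast_nonneg i) hilt]
    rw [hmod] at h3
    simp only [Int.toNat_natCast] at h3
    omega
  omega
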